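/- Let d, q > 0 and r₁, r₂, r₃ ≥ 0 with r₁ = r₂. Let A be the 3×3 matrix with rows [−d−q+r₁, 0, d], [0, −d−q+r₂, d], [d+q, d+q, −2d+r₃], and B the 2×2 matrix with rows [−d−q+r₂, 2d], [d+q, −2d+r₃]. Then s(A) = s(B). -/
import Mathlib


open Matrix

/-- Spectral bound: maximum real part of the (complex) eigenvalues. -/
noncomputable def specBound {n : ℕ} (M : Matrix (Fin n) (Fin n) ℝ) : ℝ :=
  sSup {t : ℝ | ∃ μ ∈ spectrum ℂ (M.map Complex.ofReal), μ.re = t}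

lemma mem_spec_iff' {n : ℕ} (M : Matrix (Fin n) (Fin n) ℂ) (μ : ℂ) :
    μ ∈ spectrum ℂ M ↔ (Matrix.diagonal (fun _ => μ) - M).det = 0 := by
  rw [spectrum.mem_iff, Matrix.algebraMap_eq_diagonal, Matrix.isUnit_iff_isUnit_det,
    isUnit_iff_ne_zero, not_ne_iff]
  simp [Pi.algebraMap_def, Algebra.algebraMap_self_apply]

/-- Comparison of spectral bounds of the tributary matrix A
and its limiting matrix B. -/
theorem specBound_tributary_eq (d q r₁ r₂ r₃ : ℝ) (hd : 0 < d) (hq : 0 < q)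
    (hr₁ : 0 ≤ r₁) (hr₂ : 0 ≤ r₂) (hr₃ : 0 ≤ r₃) (heq : r₁ = r₂) :
    specBound !![-d - q + r₁, 0, d;
                   0, -d - q + r₂, d;
                   d + q, d + q, -2 * d + r₃] =
      specBound !![-d - q + r₂, 2 * d; d + q, -2 * d + r₃] := by
  subst heq
  set c : ℝ := -d - q + r₁ with hc
  set e : ℝ := -2 * d + r₃ with he
  have hΔpos : (0:ℝ) < (c - e)^2 + 8 * d * (d + q) := by nlinarith
  set s : ℝ := Real.sqrt ((c - e)^2 + 8 * d * (d + q)) with hsdef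
  have hs : s^2 = (c - e)^2 + 8 * d * (d + q) := Real.sq_sqrt hΔpos.le
  set lp : ℝ := (c + e + s)/2 with hlp
  set lm : ℝ := (c + e - s)/2 with hlm
  have hs0 : 0 ≤ s := Real.sqrt_nonneg _
  have hce : c - e ≤ s := by
    have h1 : (c-e)^2 ≤ (c-e)^2 + 8*d*(d+q) := by nlinarith
    calc c - e ≤ |c - e| := le_abs_self _
    _ = Real.sqrt ((c-e)^2) := (Real.sqrt_sq_eq_abs _).symm
    _ ≤ s := Real.sqrt_le_sqrt h1
  have hmlp : lm ≤ lp := by rw [hlp, hlm]; linarith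
  have hclp : c ≤ lp := by rw [hlp]; linarith
  -- cast identities
  have hcC : (c:ℂ) = -↑d - ↑q + ↑r₁ := by rw [hc]; push_cast; ring
  have heC : (e:ℂ) = -2*↑d + ↑r₃ := by rw [he]; push_cast; ring
  have hlmC : (lm:ℂ) = ((c:ℂ) + e - s)/2 := by rw [hlm]; push_cast; ring
  have hlpC : (lp:ℂ) = ((c:ℂ) + e + s)/2 := by rw [hlp]; push_cast; ring
  have hsC : (s:ℂ)^2 = ((c:ℂ) - e)^2 + 8*↑d*(↑d+↑q) := by
    have : ((s^2 : ℝ) : ℂ) = (((c - e)^2 + 8 * d * (d + q) : ℝ) : ℂ) := by rw [hs]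
    push_cast at this
    linear_combination this
  have hsC2 : (s:ℂ)^2 = ((-↑d - ↑q + ↑r₁ : ℂ) - (-2*↑d + ↑r₃))^2 + 8*↑d*(↑d+↑q) := by
    rw [hsC, hcC, heC]
  -- determinant factorizations
  have hfB : ∀ μ : ℂ, ((Matrix.diagonal fun _ => μ) -
      (!![-d - q + r₁, 2 * d; d + q, -2 * d + r₃]).map Complex.ofReal).det
        = (μ - lm) * (μ - lp) := by
    intro μ
    rw [Matrix.det_fin_two]
    simp only [Matrix.sub_apply, Matrix.diagonal_apply, Matrix.map_apply, Matrix.of_apply,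
      Matrix.cons_val', Matrix.cons_val_zero, Matrix.cons_val_one, Matrix.head_cons,
      Matrix.empty_val', Matrix.cons_val_fin_one, Matrix.head_fin_const]
    rw [hlmC, hlpC, hcC, heC]
    push_cast
    linear_combination (1/4 : ℂ) * hsC2
  have hfA : ∀ μ : ℂ, ((Matrix.diagonal fun _ => μ) -
      (!![-d - q + r₁, 0, d; 0, -d - q + r₁, d; d + q, d + q, -2 * d + r₃]).map Complex.ofReal).det
        = (μ - c) * ((μ - lm) * (μ - lp)) := by
    intro μ
    rw [Matrix.det_fin_three]
    simp only [Matrix.sub_apply, Matrix.diagonal_apply, Matrix.map_apply, Matrix.of_apply,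
      Matrix.cons_val', Matrix.cons_val_zero, Matrix.cons_val_one, Matrix.head_cons,
      Matrix.empty_val', Matrix.cons_val_fin_one, Matrix.head_fin_const, Matrix.cons_val_two,
      Matrix.tail_cons]
    rw [hlmC, hlpC, hcC, heC]
    push_cast
    linear_combination ((μ - (-↑d - ↑q + ↑r₁ : ℂ))/4) * hsC2
  -- spectra as sets
  have specB : ∀ μ : ℂ, μ ∈ spectrum ℂ
      ((!![-d - q + r₁, 2 * d; d + q, -2 * d + r₃]).map Complex.ofReal) ↔
      (μ = (lm:ℂ) ∨ μ = (lp:ℂ)) := by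
    intro μ
    rw [mem_spec_iff', hfB μ, mul_eq_zero, sub_eq_zero, sub_eq_zero]
  have specA : ∀ μ : ℂ, μ ∈ spectrum ℂ
      ((!![-d - q + r₁, 0, d; 0, -d - q + r₁, d; d + q, d + q, -2 * d + r₃]).map Complex.ofReal) ↔
      (μ = (c:ℂ) ∨ μ = (lm:ℂ) ∨ μ = (lp:ℂ)) := by
    intro μ
    rw [mem_spec_iff', hfA μ, mul_eq_zero, mul_eq_zero, sub_eq_zero, sub_eq_zero, sub_eq_zero]
  -- real-part sets
  have RB : {t : ℝ | ∃ μ ∈ spectrum ℂ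
      ((!![-d - q + r₁, 2 * d; d + q, -2 * d + r₃]).map Complex.ofReal), μ.re = t}
      = {lm, lp} := by
    ext t
    simp only [Set.mem_setOf_eq, specB, Set.mem_insert_iff, Set.mem_singleton_iff]
    constructor
    · rintro ⟨μ, (rfl | rfl), rfl⟩ <;> simp
    · rintro (rfl | rfl)
      exacts [⟨lm, Or.inl rfl, by simp⟩, ⟨lp, Or.inr rfl, by simp⟩]
  have RA : {t : ℝ | ∃ μ ∈ spectrum ℂ
      ((!![-d - q + r₁, 0, d; 0, -d - q + r₁, d; d + q, d + q, -2 * d + r₃]).map Complex.ofReal), μ.re = t}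
      = {c, lm, lp} := by
    ext t
    simp only [Set.mem_setOf_eq, specA, Set.mem_insert_iff, Set.mem_singleton_iff]
    constructor
    · rintro ⟨μ, (rfl | rfl | rfl), rfl⟩ <;> simp
    · rintro (rfl | rfl | rfl)
      exacts [⟨c, Or.inl rfl, by simp⟩, ⟨lm, Or.inr (Or.inl rfl), by simp⟩,
        ⟨lp, Or.inr (Or.inr rfl), by simp⟩]
  have hGA : IsGreatest ({c, lm, lp} : Set ℝ) lp := by
    constructor
    · right; right; rfl
    · rintro x (rfl | rfl | rfl)
      exacts [hclp, hmlp, le_refl _]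
  have hGB : IsGreatest ({lm, lp} : Set ℝ) lp := by
    constructor
    · right; rfl
    · rintro x (rfl | rfl)
      exacts [hmlp, le_refl _]
  show sSup _ = sSup _
  rw [RA, RB, hGA.csSup_eq, hGB.csSup_eq]
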